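/- Define g(λ,w) = e^λ b(λ+w) - e^λ b(λ) - b(w) + b(0), where b(w) = 1/(1+e^w). For all λ ≥ 0 and w ≤ 0, g(λ,w) ≥ 0. -/
import Mathlib


noncomputable def b : ℝ → ℝ := fun w => 1 / (1 + Real.exp w)

theorem g_nonneg (lam w : ℝ) (hlam : 0 ≤ lam) (hw : w ≤ 0) :
    0 ≤ Real.exp lam * b (lam + w) - Real.exp lam * b lam - b w + b 0 := by
  have hx : 1 ≤ Real.exp lam := Real.one_le_exp hlam
  have hy : Real.exp w ≤ 1 := Real.exp_le_one_iff.mpr hw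
  have hy0 : 0 < Real.exp w := Real.exp_pos w
  have hx0 : 0 < Real.exp lam := Real.exp_pos lam
  set x := Real.exp lam with hxdef
  set y := Real.exp w with hydef
  have hxy : Real.exp (lam + w) = x * y := Real.exp_add lam w
  have h0 : Real.exp (0:ℝ) = 1 := Real.exp_zero
  simp only [b, hxy, h0]
  have d1 : (0:ℝ) < 1 + x * y := by positivity
  have d2 : (0:ℝ) < 1 + x := by positivity
  have d3 : (0:ℝ) < 1 + y := by positivity
  have key : x * (1 / (1 + x * y)) - x * (1 / (1 + x)) - 1 / (1 + y) + 1 / (1 + 1)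
      = ((1 - y) * (x - 1) * (x * (y + 2) + 1)) / (2 * (1 + x * y) * (1 + x) * (1 + y)) := by
    field_simp
    ring
  rw [key]
  apply div_nonneg
  · have : 0 ≤ (1 - y) := by linarith
    have h2 : 0 ≤ (x - 1) := by linarith
    have h3 : 0 ≤ x * (y + 2) + 1 := by positivity
    positivity
  · positivity
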